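/- A finite set system (X, F) is well-graded with VC-dimension at most 1 if and only if its one-inclusion graph is a tree in which all edge labels are distinct, where the edge between A and A ∪ {b} is labelled b. -/

import Mathlib

/-- The one-inclusion graph of a set system. -/
def oneInclusion {α : Type*} [DecidableEq α] (F : Finset (Finset α)) :
    SimpleGraph {A : Finset α // A ∈ F} where
  Adj A B := (symmDiff A.1 B.1).card = 1
  symm := by
    constructor
    intro A B h
    rwa [symmDiff_comm] at h
  loopless := by
    constructor
    intro A h
    simp [symmDiff_self] at h

/-- A set system is well-graded if the Hamming distance between any two members
equals their distance in the one-inclusion graph. -/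
def WellGraded {α : Type*} [DecidableEq α] (F : Finset (Finset α)) : Prop :=
  ∀ A B : {A : Finset α // A ∈ F},
    (oneInclusion F).dist A B = (symmDiff A.1 B.1).card

/-- The VC-dimension of a finite set system. -/
def vcDim {α : Type*} [DecidableEq α] (F : Finset (Finset α)) : ℕ :=
  F.shatterer.sup Finset.card

namespace OneInclusionAux
open SimpleGraph

variable {α : Type*} [DecidableEq α] {F : Finset (Finset α)}

/-- The multiset of labels along a walk in the one-inclusion graph. -/
def labels {A B : {A : Finset α // A ∈ F}} (w : (oneInclusion F).Walk A B) : Multiset α :=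
  (w.darts.map fun d => (symmDiff d.fst.1 d.snd.1).val).sum

@[simp] lemma labels_nil {A : {A : Finset α // A ∈ F}} :
    labels (.nil : (oneInclusion F).Walk A A) = 0 := rfl

@[simp] lemma labels_cons {A B C : {A : Finset α // A ∈ F}}
    (h : (oneInclusion F).Adj A B) (w : (oneInclusion F).Walk B C) :
    labels (.cons h w) = (symmDiff A.1 B.1).val + labels w := rfl

lemma card_labels {A B : {A : Finset α // A ∈ F}} (w : (oneInclusion F).Walk A B) :
    Multiset.card (labels w) = w.length := by
  induction w with
  | nil => rfl
  | cons h w ih =>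
      rename_i A B C
      have hc : Multiset.card (symmDiff A.1 B.1).val = 1 := h
      simp only [labels_cons, Multiset.card_add, ih, SimpleGraph.Walk.length_cons, hc]
      omega

lemma mem_labels {A B : {A : Finset α // A ∈ F}} {w : (oneInclusion F).Walk A B} {x : α} :
    x ∈ labels w ↔ ∃ d ∈ w.darts, x ∈ symmDiff d.fst.1 d.snd.1 := by
  induction w with
  | nil => simp [labels]
  | cons h w ih =>
      simp only [labels_cons, Multiset.mem_add, ih, SimpleGraph.Walk.darts_cons, List.mem_cons]
      constructor
      · rintro (hx | ⟨d, hd, hx⟩)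
        · exact ⟨_, Or.inl rfl, hx⟩
        · exact ⟨d, Or.inr hd, hx⟩
      · rintro ⟨d, (rfl | hd), hx⟩
        · exact Or.inl hx
        · exact Or.inr ⟨d, hd, hx⟩

lemma parity {A B : {A : Finset α // A ∈ F}} (w : (oneInclusion F).Walk A B) (x : α) :
    x ∈ symmDiff A.1 B.1 ↔ Odd ((labels w).count x) := by
  induction w with
  | nil => simp
  | cons h w ih =>
      rename_i A B C
      have key : x ∈ symmDiff A.1 C.1 ↔
          ((x ∈ symmDiff A.1 B.1 ∧ x ∉ symmDiff B.1 C.1) ∨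
           (x ∈ symmDiff B.1 C.1 ∧ x ∉ symmDiff A.1 B.1)) := by
        simp only [Finset.mem_symmDiff]
        tauto
      rw [labels_cons, Multiset.count_add]
      by_cases hx : x ∈ symmDiff A.1 B.1
      · have h1 : Multiset.count x (symmDiff A.1 B.1).val = 1 :=
          Multiset.count_eq_one_of_mem (symmDiff A.1 B.1).nodup hx
        rw [h1, key]
        simp only [hx, true_and, not_true, and_false, or_false, false_or, ← ih]
        rw [add_comm, Nat.odd_add_one, ih]
      · have h1 : Multiset.count x (symmDiff A.1 B.1).val = 0 :=
          Multiset.count_eq_zero_of_notMem hx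
        rw [h1, key]
        simp [hx, ih]

lemma lower_of_mem {A B : {A : Finset α // A ∈ F}} (h : (oneInclusion F).Adj A B)
    {b : α} (hb : b ∈ symmDiff A.1 B.1) :
    (b ∉ A.1 ∧ B.1 = insert b A.1) ∨ (b ∉ B.1 ∧ A.1 = insert b B.1) := by
  have hc : (symmDiff A.1 B.1).card = 1 := h
  obtain ⟨a, ha⟩ := Finset.card_eq_one.mp hc
  have hab : a = b := by rw [ha] at hb; exact (Finset.mem_singleton.mp hb).symm
  subst hab
  have hmem : ∀ x, x ∈ symmDiff A.1 B.1 ↔ x = a := by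
    intro x; rw [ha]; simp
  have hone : (a ∈ A.1 ∧ a ∉ B.1) ∨ (a ∈ B.1 ∧ a ∉ A.1) := by
    have := (hmem a).mpr rfl
    rwa [Finset.mem_symmDiff] at this
  rcases hone with ⟨haA, haB⟩ | ⟨haB, haA⟩
  · right
    refine ⟨haB, ?_⟩
    ext x
    rcases eq_or_ne x a with rfl | hx
    · simp [haA]
    · have := (hmem x).not.mpr hx
      rw [Finset.mem_symmDiff] at this
      simp only [Finset.mem_insert, hx, false_or]
      tauto
  · left
    refine ⟨haA, ?_⟩
    ext x
    rcases eq_or_ne x a with rfl | hx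
    · simp [haB]
    · have := (hmem x).not.mpr hx
      rw [Finset.mem_symmDiff] at this
      simp only [Finset.mem_insert, hx, false_or]
      tauto

lemma edge_eq_of_label
    (hdl : ∀ b : α, ∀ A ∈ F, ∀ B ∈ F,
      b ∉ A → insert b A ∈ F → b ∉ B → insert b B ∈ F → A = B)
    {A B U V : {A : Finset α // A ∈ F}} (h1 : (oneInclusion F).Adj A B)
    (h2 : (oneInclusion F).Adj U V) {b : α}
    (hb1 : b ∈ symmDiff A.1 B.1) (hb2 : b ∈ symmDiff U.1 V.1) :
    s(A, B) = s(U, V) := by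
  rcases lower_of_mem h1 hb1 with ⟨hA, hBA⟩ | ⟨hB, hAB⟩ <;>
    rcases lower_of_mem h2 hb2 with ⟨hU, hVU⟩ | ⟨hV, hUV⟩
  · have hAU : A.1 = U.1 := hdl b A.1 A.2 U.1 U.2 hA (hBA ▸ B.2) hU (hVU ▸ V.2)
    have h1' : A = U := Subtype.ext hAU
    have h2' : B = V := Subtype.ext (by rw [hBA, hVU, hAU])
    rw [h1', h2']
  · have hAV : A.1 = V.1 := hdl b A.1 A.2 V.1 V.2 hA (hBA ▸ B.2) hV (hUV ▸ U.2)
    have h1' : A = V := Subtype.ext hAV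
    have h2' : B = U := Subtype.ext (by rw [hBA, hUV, hAV])
    rw [h1', h2', Sym2.eq_swap]
  · have hBU : B.1 = U.1 := hdl b B.1 B.2 U.1 U.2 hB (hAB ▸ A.2) hU (hVU ▸ V.2)
    have h1' : B = U := Subtype.ext hBU
    have h2' : A = V := Subtype.ext (by rw [hAB, hVU, hBU])
    rw [h1', h2', Sym2.eq_swap]
  · have hBV : B.1 = V.1 := hdl b B.1 B.2 V.1 V.2 hB (hAB ▸ A.2) hV (hUV ▸ U.2)
    have h1' : B = V := Subtype.ext hBV
    have h2' : A = U := Subtype.ext (by rw [hAB, hUV, hBV])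
    rw [h1', h2']

lemma dart_edge_mem {A B : {A : Finset α // A ∈ F}} {w : (oneInclusion F).Walk A B}
    {d : (oneInclusion F).Dart} (hd : d ∈ w.darts) : s(d.fst, d.snd) ∈ w.edges :=
  List.mem_map_of_mem (f := SimpleGraph.Dart.edge) hd

lemma labels_nodup
    (hdl : ∀ b : α, ∀ A ∈ F, ∀ B ∈ F,
      b ∉ A → insert b A ∈ F → b ∉ B → insert b B ∈ F → A = B)
    {A B : {A : Finset α // A ∈ F}} {p : (oneInclusion F).Walk A B} (hp : p.IsPath) :
    (labels p).Nodup := by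
  induction p with
  | nil => simp
  | cons h p ih =>
      rename_i A B C
      obtain ⟨b, hb⟩ := Finset.card_eq_one.mp (h : (symmDiff A.1 B.1).card = 1)
      rw [labels_cons, hb, Finset.singleton_val, Multiset.singleton_add, Multiset.nodup_cons]
      refine ⟨?_, ih hp.of_cons⟩
      intro hmem
      obtain ⟨d, hd, hxd⟩ := mem_labels.mp hmem
      have hbm : b ∈ symmDiff A.1 B.1 := by rw [hb]; exact Finset.mem_singleton_self b
      have hedge : s(A, B) = s(d.fst, d.snd) := edge_eq_of_label hdl h d.adj hbm hxd
      have hmem' : s(A, B) ∈ p.edges := hedge ▸ dart_edge_mem hd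
      have hnd := hp.edges_nodup
      rw [SimpleGraph.Walk.edges_cons] at hnd
      exact (List.nodup_cons.mp hnd).1 hmem'

lemma const_of_not_mem_labels {A B : {A : Finset α // A ∈ F}}
    {w : (oneInclusion F).Walk A B} {y : α} (hy : y ∉ labels w) :
    ∀ u ∈ w.support, (y ∈ u.1 ↔ y ∈ A.1) := by
  induction w with
  | nil =>
      intro u hu
      rw [SimpleGraph.Walk.support_nil, List.mem_singleton] at hu
      rw [hu]
  | cons h w ih =>
      rename_i A B C
      rw [labels_cons, Multiset.mem_add] at hy
      push_neg at hy
      have hAB : y ∈ B.1 ↔ y ∈ A.1 := by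
        have : y ∉ symmDiff A.1 B.1 := hy.1
        rw [Finset.mem_symmDiff] at this
        tauto
      intro u hu
      rw [SimpleGraph.Walk.support_cons, List.mem_cons] at hu
      rcases hu with rfl | hu
      · rfl
      · rw [ih hy.2 u hu, hAB]

lemma card_symmDiff_le_length {A B : {A : Finset α // A ∈ F}}
    (w : (oneInclusion F).Walk A B) : (symmDiff A.1 B.1).card ≤ w.length := by
  have hsub : symmDiff A.1 B.1 ⊆ (labels w).toFinset := by
    intro x hx
    rw [Multiset.mem_toFinset]
    exact Multiset.count_pos.mp ((parity w x).mp hx).pos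
  calc (symmDiff A.1 B.1).card ≤ (labels w).toFinset.card := Finset.card_le_card hsub
    _ ≤ Multiset.card (labels w) := Multiset.toFinset_card_le _
    _ = w.length := card_labels w

lemma length_le_card_symmDiff {A B : {A : Finset α // A ∈ F}}
    {p : (oneInclusion F).Walk A B} (hnd : (labels p).Nodup) :
    p.length ≤ (symmDiff A.1 B.1).card := by
  have hsub : (labels p).toFinset ⊆ symmDiff A.1 B.1 := by
    intro x hx
    rw [Multiset.mem_toFinset] at hx
    rw [parity p x, Multiset.count_eq_one_of_mem hnd hx]
    exact odd_one
  calc p.length = Multiset.card (labels p) := (card_labels p).symm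
    _ = (labels p).toFinset.card := (Multiset.toFinset_card_eq_card_iff_nodup.mpr hnd).symm
    _ ≤ (symmDiff A.1 B.1).card := Finset.card_le_card hsub

/-- From a dart labelled `x`, extract the lower endpoint. -/
lemma extract_lower {d : (oneInclusion F).Dart} {x : α}
    (hxd : x ∈ symmDiff d.fst.1 d.snd.1) :
    ∃ C : Finset α, C ∈ F ∧ x ∉ C ∧ insert x C ∈ F ∧
      (C = d.fst.1 ∨ C = d.snd.1) := by
  rcases lower_of_mem d.adj hxd with ⟨h1, h2⟩ | ⟨h1, h2⟩
  · exact ⟨d.fst.1, d.fst.2, h1, h2 ▸ d.snd.2, Or.inl rfl⟩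
  · exact ⟨d.snd.1, d.snd.2, h1, h2 ▸ d.fst.2, Or.inr rfl⟩

/-- If `{x, b}` is "shattered" by four explicit witnesses, VC dimension is at least 2. -/
lemma vc_ge_two (hvc : vcDim F ≤ 1) {A B : Finset α} {x b : α}
    (hA : A ∈ F) (hB : B ∈ F) (hbA : b ∉ A) (hAb : insert b A ∈ F)
    (hbB : b ∉ B) (hBb : insert b B ∈ F) (hxA : x ∈ A) (hxB : x ∉ B) : False := by
  have hxb : x ≠ b := fun h => hbA (h ▸ hxA)
  have hsh : F.Shatters {x, b} := by
    intro t ht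
    have ht' : t = ∅ ∨ t = {x} ∨ t = {b} ∨ t = {x, b} := by
      have hsub : ∀ a ∈ t, a = x ∨ a = b := by
        intro a hat
        simpa using ht hat
      by_cases hxt : x ∈ t <;> by_cases hbt : b ∈ t
      · right; right; right
        apply Finset.Subset.antisymm ht
        intro a ha
        rcases Finset.mem_insert.mp ha with rfl | ha
        · exact hxt
        · rw [Finset.mem_singleton] at ha; exact ha ▸ hbt
      · right; left
        ext a
        simp only [Finset.mem_singleton]
        constructor
        · intro hat
          rcases hsub a hat with rfl | rfl
          · rfl
          · exact absurd hat hbt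
        · rintro rfl; exact hxt
      · right; right; left
        ext a
        simp only [Finset.mem_singleton]
        constructor
        · intro hat
          rcases hsub a hat with rfl | rfl
          · exact absurd hat hxt
          · rfl
        · rintro rfl; exact hbt
      · left
        ext a
        simp only [Finset.notMem_empty, iff_false]
        intro hat
        rcases hsub a hat with rfl | rfl
        · exact hxt hat
        · exact hbt hat
    rcases ht' with rfl | rfl | rfl | rfl
    · refine ⟨B, hB, ?_⟩
      ext a
      simp only [Finset.mem_inter, Finset.mem_insert, Finset.mem_singleton,
        Finset.notMem_empty, iff_false]
      rintro ⟨rfl | rfl, haB⟩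
      · exact hxB haB
      · exact hbB haB
    · refine ⟨A, hA, ?_⟩
      ext a
      simp only [Finset.mem_inter, Finset.mem_insert, Finset.mem_singleton]
      constructor
      · rintro ⟨rfl | rfl, haA⟩
        · rfl
        · exact absurd haA hbA
      · rintro rfl; exact ⟨Or.inl rfl, hxA⟩
    · refine ⟨insert b B, hBb, ?_⟩
      ext a
      simp only [Finset.mem_inter, Finset.mem_insert, Finset.mem_singleton]
      constructor
      · rintro ⟨rfl | rfl, h | h⟩
        · exact absurd h hxb
        · exact absurd h hxB
        · rfl
        · rfl
      · rintro rfl; exact ⟨Or.inr rfl, Or.inl rfl⟩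
    · refine ⟨insert b A, hAb, ?_⟩
      ext a
      simp only [Finset.mem_inter, Finset.mem_insert, Finset.mem_singleton]
      constructor
      · rintro ⟨h, _⟩; exact h
      · rintro (rfl | rfl)
        · exact ⟨Or.inl rfl, Or.inr hxA⟩
        · exact ⟨Or.inr rfl, Or.inl rfl⟩
  have hmem : ({x, b} : Finset α) ∈ F.shatterer := Finset.mem_shatterer.mpr hsh
  have h2 : ({x, b} : Finset α).card = 2 := Finset.card_pair hxb
  have := Finset.le_sup (f := Finset.card) hmem
  rw [h2] at this
  exact absurd (this.trans hvc) (by norm_num)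

lemma distinct_of_vc (hvc : vcDim F ≤ 1) :
    ∀ b : α, ∀ A ∈ F, ∀ B ∈ F,
      b ∉ A → insert b A ∈ F → b ∉ B → insert b B ∈ F → A = B := by
  intro b A hA B hB hbA hAb hbB hBb
  by_contra hne
  have hsd : (symmDiff A B).Nonempty := by
    rw [Finset.nonempty_iff_ne_empty]
    intro h
    exact hne (symmDiff_eq_bot.mp h)
  obtain ⟨x, hx⟩ := hsd
  rw [Finset.mem_symmDiff] at hx
  rcases hx with ⟨hxA, hxB⟩ | ⟨hxB, hxA⟩
  · exact vc_ge_two hvc hA hB hbA hAb hbB hBb hxA hxB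
  · exact vc_ge_two hvc hB hA hbB hBb hbA hAb hxB hxA

end OneInclusionAux

open OneInclusionAux SimpleGraph in
theorem wellGraded_vcDim_le_one_iff_tree_distinct_labels {α : Type*}
    [DecidableEq α] (F : Finset (Finset α)) (hF : F.Nonempty) :
    (WellGraded F ∧ vcDim F ≤ 1) ↔
      ((oneInclusion F).IsTree ∧
        ∀ b : α, ∀ A ∈ F, ∀ B ∈ F,
          b ∉ A → insert b A ∈ F → b ∉ B → insert b B ∈ F → A = B) := by
  constructor
  · rintro ⟨hwg, hvc⟩
    have hdl := distinct_of_vc hvc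
    refine ⟨⟨?_, ?_⟩, hdl⟩
    · -- connected
      rw [SimpleGraph.connected_iff]
      constructor
      · intro A B
        by_cases hAB : A = B
        · exact hAB ▸ Reachable.refl A
        · apply SimpleGraph.Reachable.of_dist_ne_zero
          rw [hwg A B]
          intro h
          exact hAB (Subtype.ext (symmDiff_eq_bot.mp (Finset.card_eq_zero.mp h)))
      · obtain ⟨A, hA⟩ := hF
        exact ⟨⟨A, hA⟩⟩
    · -- acyclic
      intro v c hc
      cases c with
      | nil => exact hc.ne_nil rfl
      | cons h p =>
          rename_i w
          obtain ⟨b, hb⟩ := Finset.card_eq_one.mp (h : (symmDiff v.1 w.1).card = 1)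
          have hbm : b ∈ symmDiff v.1 w.1 := by rw [hb]; exact Finset.mem_singleton_self b
          have hbm' : b ∈ symmDiff w.1 v.1 := by rwa [symmDiff_comm]
          have hblab : b ∈ labels p :=
            Multiset.count_pos.mp ((parity p b).mp hbm').pos
          obtain ⟨d, hd, hbd⟩ := mem_labels.mp hblab
          have hedge : s(v, w) = s(d.fst, d.snd) := edge_eq_of_label hdl h d.adj hbm hbd
          have hmem' : s(v, w) ∈ p.edges := hedge ▸ dart_edge_mem hd
          have hnd := hc.isCircuit.isTrail.edges_nodup
          rw [SimpleGraph.Walk.edges_cons] at hnd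
          exact (List.nodup_cons.mp hnd).1 hmem'
  · rintro ⟨htree, hdl⟩
    constructor
    · -- well-graded
      intro A B
      obtain ⟨p, hp, hlen⟩ := (htree.isConnected A B).exists_path_of_dist
      apply le_antisymm
      · rw [← hlen]
        exact length_le_card_symmDiff (labels_nodup hdl hp)
      · rw [← hlen]
        exact card_symmDiff_le_length p
    · -- VC dimension
      apply Finset.sup_le
      intro s hs
      by_contra hcard
      push_neg at hcard
      obtain ⟨x, hxs, y, hys, hxy⟩ := Finset.one_lt_card.mp hcard
      have hpair : F.Shatters {x, y} :=
        (Finset.mem_shatterer.mp hs).mono_right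
          (Finset.insert_subset hxs (Finset.singleton_subset_iff.mpr hys))
      obtain ⟨P00, hP00F, h00⟩ := hpair (Finset.empty_subset _)
      obtain ⟨P10, hP10F, h10⟩ := hpair (Finset.singleton_subset_iff.mpr (by simp) :
        ({x} : Finset α) ⊆ {x, y})
      obtain ⟨P01, hP01F, h01⟩ := hpair (Finset.singleton_subset_iff.mpr (by simp) :
        ({y} : Finset α) ⊆ {x, y})
      obtain ⟨P11, hP11F, h11⟩ := hpair (Finset.Subset.refl _)
      -- memberships
      have hx00 : x ∉ P00 := fun h => by
        have : x ∈ ({x, y} : Finset α) ∩ P00 := by simp [h]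
        rw [h00] at this; simp at this
      have hy00 : y ∉ P00 := fun h => by
        have : y ∈ ({x, y} : Finset α) ∩ P00 := by simp [h]
        rw [h00] at this; simp at this
      have hx10 : x ∈ P10 := by
        have : x ∈ ({x, y} : Finset α) ∩ P10 := by rw [h10]; simp
        exact (Finset.mem_inter.mp this).2
      have hy10 : y ∉ P10 := fun h => by
        have : y ∈ ({x, y} : Finset α) ∩ P10 := by simp [h]
        rw [h10] at this; simp at this
        exact hxy this.symm
      have hx01 : x ∉ P01 := fun h => by
        have : x ∈ ({x, y} : Finset α) ∩ P01 := by simp [h]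
        rw [h01] at this; simp at this
        exact hxy this
      have hy01 : y ∈ P01 := by
        have : y ∈ ({x, y} : Finset α) ∩ P01 := by rw [h01]; simp
        exact (Finset.mem_inter.mp this).2
      have hx11 : x ∈ P11 := by
        have : x ∈ ({x, y} : Finset α) ∩ P11 := by rw [h11]; simp
        exact (Finset.mem_inter.mp this).2
      have hy11 : y ∈ P11 := by
        have : y ∈ ({x, y} : Finset α) ∩ P11 := by rw [h11]; simp
        exact (Finset.mem_inter.mp this).2
      set v00 : {A : Finset α // A ∈ F} := ⟨P00, hP00F⟩
      set v10 : {A : Finset α // A ∈ F} := ⟨P10, hP10F⟩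
      set v01 : {A : Finset α // A ∈ F} := ⟨P01, hP01F⟩
      set v11 : {A : Finset α // A ∈ F} := ⟨P11, hP11F⟩
      obtain ⟨p1, hp1, _⟩ := (htree.isConnected v00 v10).exists_path_of_dist
      obtain ⟨p2, hp2, _⟩ := (htree.isConnected v01 v11).exists_path_of_dist
      -- x-darts
      have hx1 : x ∈ symmDiff v00.1 v10.1 := by
        rw [Finset.mem_symmDiff]; exact Or.inr ⟨hx10, hx00⟩
      have hx2 : x ∈ symmDiff v01.1 v11.1 := by
        rw [Finset.mem_symmDiff]; exact Or.inr ⟨hx11, hx01⟩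
      obtain ⟨d1, hd1, hxd1⟩ := mem_labels.mp
        (Multiset.count_pos.mp ((parity p1 x).mp hx1).pos)
      obtain ⟨d2, hd2, hxd2⟩ := mem_labels.mp
        (Multiset.count_pos.mp ((parity p2 x).mp hx2).pos)
      -- y constant along both paths
      have hy1 : y ∉ labels p1 := by
        intro hmem
        have hodd := (parity p1 y).mpr
          (by rw [Multiset.count_eq_one_of_mem (labels_nodup hdl hp1) hmem]; exact odd_one)
        rw [Finset.mem_symmDiff] at hodd
        tauto
      have hy2 : y ∉ labels p2 := by
        intro hmem
        have hodd := (parity p2 y).mpr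
          (by rw [Multiset.count_eq_one_of_mem (labels_nodup hdl hp2) hmem]; exact odd_one)
        rw [Finset.mem_symmDiff] at hodd
        tauto
      have hc1 := const_of_not_mem_labels hy1
      have hc2 := const_of_not_mem_labels hy2
      have hyf1 : y ∉ d1.fst.1 := fun h =>
        hy00 ((hc1 _ (SimpleGraph.Walk.dart_fst_mem_support_of_mem_darts _ hd1)).mp h)
      have hys1 : y ∉ d1.snd.1 := fun h =>
        hy00 ((hc1 _ (SimpleGraph.Walk.dart_snd_mem_support_of_mem_darts _ hd1)).mp h)
      have hyf2 : y ∈ d2.fst.1 :=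
        (hc2 _ (SimpleGraph.Walk.dart_fst_mem_support_of_mem_darts _ hd2)).mpr hy01
      -- lower endpoints
      obtain ⟨C1, hC1F, hxC1, hC1x, hC1eq⟩ := extract_lower hxd1
      obtain ⟨C2, hC2F, hxC2, hC2x, hC2eq⟩ := extract_lower hxd2
      have hC12 : C1 = C2 := hdl x C1 hC1F C2 hC2F hxC1 hC1x hxC2 hC2x
      have hyC1 : y ∉ C1 := by
        rcases hC1eq with h | h
        · exact h ▸ hyf1
        · exact h ▸ hys1
      have hyC2 : y ∈ C2 := by
        rcases hC2eq with h | h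
        · exact h ▸ hyf2
        · -- C2 = d2.snd.1 : then d2.fst.1 = insert x C2, y ∈ d2.fst.1, y ≠ x
          have hy' : y ∈ d2.snd.1 :=
            (hc2 _ (SimpleGraph.Walk.dart_snd_mem_support_of_mem_darts _ hd2)).mpr hy01
          exact h ▸ hy'
      exact hyC1 (hC12 ▸ hyC2)
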